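/- A norm on the space of finitely supported complex sequences which is permutation-invariant and multiplicative is unconditional: if x and y are finitely supported complex sequences with |x_i| = |y_i| for every i, then ‖x‖ = ‖y‖. -/

import Mathlib

/-- Tensor product of finitely supported complex sequences, regarded as a
finitely supported sequence via a fixed bijection `e : ℕ ≃ ℕ × ℕ`. -/
noncomputable def tensorC (e : ℕ ≃ ℕ × ℕ) (x y : ℕ →₀ ℂ) : ℕ →₀ ℂ :=
  Finsupp.onFinset ((x.support ×ˢ y.support).image e.symm)
    (fun n => x (e n).1 * y (e n).2)
    (fun n h => by
      simp only [Finset.mem_image, Finset.mem_product]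
      exact ⟨e n, ⟨Finsupp.mem_support_iff.2 (left_ne_zero_of_mul h),
        Finsupp.mem_support_iff.2 (right_ne_zero_of_mul h)⟩, e.symm_apply_apply n⟩)

/-- Permutation of ℕ that cyclically shifts `[0, m)`; its inverse shifts by `k`. -/
def shiftPerm (m k : ℕ) (hm : 0 < m) : Equiv.Perm ℕ where
  toFun j := if j < m then (j + (m - k % m)) % m else j
  invFun j := if j < m then (j + k) % m else j
  left_inv j := by
    by_cases hj : j < m
    · have h1 : (j + (m - k % m)) % m < m := Nat.mod_lt _ hm
      simp only [hj, if_pos, h1, if_pos]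
      rw [Nat.mod_add_mod]
      have hd := Nat.mod_add_div k m
      have hlt : k % m < m := Nat.mod_lt _ hm
      have he : j + (m - k % m) + k = j + m * (1 + k / m) := by
        have : m * (1 + k / m) = m + m * (k / m) := by ring
        omega
      rw [he, Nat.add_mul_mod_self_left, Nat.mod_eq_of_lt hj]
    · simp [hj]
  right_inv j := by
    by_cases hj : j < m
    · have h1 : (j + k) % m < m := Nat.mod_lt _ hm
      simp only [hj, if_pos, h1, if_pos]
      rw [Nat.mod_add_mod]
      have hd := Nat.mod_add_div k m
      have hlt : k % m < m := Nat.mod_lt _ hm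
      have he : j + k + (m - k % m) = j + m * (1 + k / m) := by
        have : m * (1 + k / m) = m + m * (k / m) := by ring
        omega
      rw [he, Nat.add_mul_mod_self_left, Nat.mod_eq_of_lt hj]
    · simp [hj]

lemma shiftPerm_symm_apply (m k : ℕ) (hm : 0 < m) (j : ℕ) :
    (shiftPerm m k hm).symm j = if j < m then (j + k) % m else j := rfl

/-- The vector `(1, ζ, ζ², …, ζ^{m-1}, 0, …)`. -/
noncomputable def rootVec (m : ℕ) (ζ : ℂ) : ℕ →₀ ℂ :=
  Finsupp.onFinset (Finset.range m) (fun j => if j < m then ζ ^ j else 0)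
    (fun j h => Finset.mem_range.2 (by by_contra hc; exact h (if_neg hc)))

lemma rootVec_apply (m : ℕ) (ζ : ℂ) (j : ℕ) :
    rootVec m ζ j = if j < m then ζ ^ j else 0 := rfl

lemma tensor_perm_eq (e : ℕ ≃ ℕ × ℕ) (m : ℕ) (hm : 0 < m) (ζ : ℂ) (hζ : ζ ^ m = 1)
    (x y : ℕ →₀ ℂ) (k : ℕ → ℕ) (hxy : ∀ i, y i = ζ ^ (k i) * x i) :
    ∃ σ : Equiv.Perm ℕ,
      Finsupp.equivMapDomain σ (tensorC e x (rootVec m ζ)) = tensorC e y (rootVec m ζ) := by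
  refine ⟨(e.trans ((Equiv.prodShear (Equiv.refl ℕ) (fun i => shiftPerm m (k i) hm)).trans
    e.symm)), ?_⟩
  ext n
  rw [Finsupp.equivMapDomain_apply]
  simp only [Equiv.symm_trans_apply, Equiv.symm_symm, Equiv.trans_apply]
  show x (e (e.symm _)).1 * rootVec m ζ (e (e.symm _)).2 = y (e n).1 * rootVec m ζ (e n).2
  rw [e.apply_symm_apply]
  obtain ⟨i, j⟩ := e n
  show x i * rootVec m ζ ((shiftPerm m (k i) hm).symm j) = y i * rootVec m ζ j
  rw [shiftPerm_symm_apply, hxy i]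
  by_cases hj : j < m
  · have h1 : (j + k i) % m < m := Nat.mod_lt _ hm
    rw [if_pos hj, rootVec_apply, if_pos h1, rootVec_apply, if_pos hj]
    rw [← pow_eq_pow_mod _ hζ, pow_add]
    ring
  · rw [if_neg hj, rootVec_apply, if_neg hj]
    ring

open Real in
lemma root_close (m : ℕ) (hm : 7 ≤ m) (ω : ℂ) (hω : ‖ω‖ = 1) :
    ∃ k : ℕ, ‖ω - (Complex.exp (2 * Real.pi / m * Complex.I)) ^ k‖ ≤ 4 * Real.pi / m := by
  have hm0 : (0:ℝ) < m := by positivity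
  have hπ : (0:ℝ) < π := Real.pi_pos
  set t : ℝ := ω.arg + 2 * π with ht
  have ht0 : 0 < t := by have := Complex.neg_pi_lt_arg ω; simp only [ht]; linarith
  have hωe : ω = Complex.exp ((t:ℝ) * Complex.I) := by
    have h1 := Complex.norm_mul_exp_arg_mul_I ω
    rw [hω, Complex.ofReal_one,
      one_mul] at h1
    rw [ht, Complex.ofReal_add, add_mul, Complex.exp_add, h1]
    rw [show ((2 * π : ℝ) : ℂ) * Complex.I = 2 * (π:ℂ) * Complex.I by push_cast; ring]
    rw [Complex.exp_two_pi_mul_I, mul_one]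
  set k : ℕ := ⌊t * m / (2 * π)⌋₊ with hk
  set s : ℝ := 2 * π * k / m with hs
  have h1 : (k:ℝ) ≤ t * m / (2 * π) := Nat.floor_le (by positivity)
  have h2 : t * m / (2 * π) < k + 1 := Nat.lt_floor_add_one _
  have h3 : t * m < (k + 1) * (2 * π) := by
    rw [div_lt_iff₀ (by positivity)] at h2; linarith
  have hts : 0 ≤ t - s ∧ t - s ≤ 2 * π / m := by
    constructor
    · rw [hs, sub_nonneg, div_le_iff₀ hm0]
      calc 2 * π * k = (k : ℝ) * (2 * π) := by ring
        _ ≤ t * m / (2*π) * (2*π) := by nlinarith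
        _ = t * m := by field_simp
    · rw [hs, sub_le_iff_le_add, ← add_div, le_div_iff₀ hm0]
      nlinarith
  have hpow : (Complex.exp (2 * Real.pi / m * Complex.I)) ^ k
      = Complex.exp ((s:ℝ) * Complex.I) := by
    rw [← Complex.exp_nat_mul]
    congr 1
    push_cast [hs]
    have : (m:ℂ) ≠ 0 := by exact_mod_cast ne_of_gt hm0
    field_simp
  have hsplit : ω - (Complex.exp (2 * Real.pi / m * Complex.I)) ^ k
      = Complex.exp ((s:ℝ) * Complex.I) * (Complex.exp (((t - s : ℝ)) * Complex.I) - 1) := by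
    rw [hpow, hωe, mul_sub, mul_one, ← Complex.exp_add]
    congr 2
    push_cast
    ring
  refine ⟨k, ?_⟩
  rw [hsplit, norm_mul,
    Complex.norm_exp_ofReal_mul_I, one_mul]
  have habs : ‖(((t - s : ℝ)) * Complex.I)‖ = t - s := by
    rw [norm_mul, Complex.norm_I, mul_one, Complex.norm_real, Real.norm_of_nonneg hts.1]
  have hle1 : ‖(((t - s : ℝ)) * Complex.I)‖ ≤ 1 := by
    rw [habs]
    have h7 : 2 * π / m ≤ 2 * π / 7 := by
      apply div_le_div_of_nonneg_left (by positivity) (by norm_num) (by exact_mod_cast hm)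
    have hπ315 : π < 3.15 := Real.pi_lt_d2
    nlinarith [hts.2]
  calc ‖(Complex.exp (((t - s : ℝ)) * Complex.I) - 1)‖
      ≤ 2 * ‖(((t - s : ℝ)) * Complex.I)‖ := Complex.norm_exp_sub_one_le hle1
    _ = 2 * (t - s) := by rw [habs]
    _ ≤ 4 * π / m := by
        rw [show (4:ℝ) * π / m = 2 * (2 * π / m) by ring]; nlinarith [hts.2]

/-- A permutation-invariant multiplicative norm on the finitely supported
complex sequences is unconditional. -/
theorem unconditional_of_perm_invariant_multiplicative_complex
    (e : ℕ ≃ ℕ × ℕ) (N : (ℕ →₀ ℂ) → ℝ)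
    (hadd : ∀ x y, N (x + y) ≤ N x + N y)
    (hsmul : ∀ (c : ℂ) (x), N (c • x) = ‖c‖ * N x)
    (hdef : ∀ x, N x = 0 ↔ x = 0)
    (hperm : ∀ (σ : Equiv.Perm ℕ) (x), N (Finsupp.equivMapDomain σ x) = N x)
    (hmul : ∀ x y, N (tensorC e x y) = N x * N y) :
    ∀ x y : ℕ →₀ ℂ, (∀ i, ‖x i‖ = ‖y i‖) → N x = N y := by

  have N0 : N 0 = 0 := (hdef 0).2 rfl
  have Nneg : ∀ z, N (-z) = N z := by
    intro z
    have : (-z : ℕ →₀ ℂ) = (-1 : ℂ) • z := by ext i; simp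
    rw [this, hsmul]
    simp
  have Nnonneg : ∀ z, 0 ≤ N z := by
    intro z
    have h := hadd z (-z)
    rw [add_neg_cancel, N0, Nneg] at h
    linarith
  have Ndiff : ∀ a b, |N a - N b| ≤ N (a - b) := by
    intro a b
    rw [abs_sub_le_iff]
    constructor
    · have := hadd (a - b) b
      rw [sub_add_cancel] at this
      linarith
    · have := hadd (b - a) a
      rw [sub_add_cancel] at this
      have h2 : N (b - a) = N (a - b) := by
        rw [show b - a = -(a - b) from (neg_sub a b).symm, Nneg]
      linarith
  set C : ℝ := N (Finsupp.single 0 1) with hC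
  have Nsingle : ∀ (i : ℕ) (c : ℂ), N (Finsupp.single i c) = ‖c‖ * C := by
    intro i c
    have h1 : Finsupp.single i c = c • Finsupp.single i (1:ℂ) := by
      rw [Finsupp.smul_single', mul_one]
    have h2 : N (Finsupp.single i (1:ℂ)) = C := by
      rw [hC, ← hperm (Equiv.swap 0 i) (Finsupp.single 0 1),
        Finsupp.equivMapDomain_single, Equiv.swap_apply_left]
    rw [h1, hsmul, h2]
  have Nsum : ∀ (s : Finset ℕ) (f : ℕ → (ℕ →₀ ℂ)),
      N (∑ i ∈ s, f i) ≤ ∑ i ∈ s, N (f i) := by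
    intro s f
    induction s using Finset.induction with
    | empty => simp [N0]
    | insert _ _ hni ih =>
      rw [Finset.sum_insert hni, Finset.sum_insert hni]
      exact (hadd _ _).trans (by linarith)
  have NsumBound : ∀ z : ℕ →₀ ℂ, N z ≤ (∑ i ∈ z.support, ‖z i‖) * C := by
    intro z
    have hz : ∑ i ∈ z.support, Finsupp.single i (z i) = z := Finsupp.sum_single z
    calc N z = N (∑ i ∈ z.support, Finsupp.single i (z i)) := by rw [hz]
      _ ≤ ∑ i ∈ z.support, N (Finsupp.single i (z i)) := Nsum _ _
      _ = ∑ i ∈ z.support, ‖z i‖ * C := by simp_rw [Nsingle]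
      _ = (∑ i ∈ z.support, ‖z i‖) * C := by rw [Finset.sum_mul]
  have hZ : ∀ (m : ℕ), 0 < m → ∀ (ζ : ℂ), ζ ^ m = 1 → ∀ (k : ℕ → ℕ) (x y : ℕ →₀ ℂ),
      (∀ i, y i = ζ ^ (k i) * x i) → N y = N x := by
    intro m hm ζ hζ k x y hxy
    obtain ⟨σ, hσ⟩ := tensor_perm_eq e m hm ζ hζ x y k hxy
    have hv : rootVec m ζ ≠ 0 := by
      intro hv0
      have : rootVec m ζ 0 = 0 := by rw [hv0]; rfl
      rw [rootVec_apply, if_pos hm, pow_zero] at this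
      exact one_ne_zero this
    have hNv : N (rootVec m ζ) ≠ 0 := fun h => hv ((hdef _).1 h)
    have h1 : N (tensorC e y (rootVec m ζ)) = N (tensorC e x (rootVec m ζ)) := by
      rw [← hσ, hperm]
    rw [hmul, hmul] at h1
    exact mul_right_cancel₀ hNv h1
  intro x y hnorm
  have hxz : ∀ i, x i = 0 → y i = 0 := by
    intro i hx
    have := hnorm i
    rw [hx, norm_zero] at this
    exact norm_eq_zero.1 this.symm
  set ω : ℕ → ℂ := fun i => if x i = 0 then 1 else y i / x i with hω
  have hω1 : ∀ i, ‖ω i‖ = 1 := by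
    intro i
    by_cases hx : x i = 0
    · simp [hω, hx]
    · have hnx : ‖x i‖ ≠ 0 := fun h => hx (norm_eq_zero.1 h)
      simp only [hω, hx, if_neg, if_false]
      rw [norm_div, ← hnorm i, div_self hnx]
  have hyω : ∀ i, y i = ω i * x i := by
    intro i
    by_cases hx : x i = 0
    · rw [hxz i hx, hx, mul_zero]
    · simp only [hω, hx, if_false]
      field_simp
  have key : ∀ ε : ℝ, 0 < ε → |N y - N x| ≤ ε := by
    intro ε hε
    have hπ : (0:ℝ) < Real.pi := Real.pi_pos
    set S : ℝ := ∑ i ∈ x.support, ‖x i‖ with hS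
    have hS0 : 0 ≤ S := Finset.sum_nonneg fun _ _ => norm_nonneg _
    have hC0 : 0 ≤ C := Nnonneg _
    obtain ⟨m, hmgt⟩ := exists_nat_gt (max 7 (4 * Real.pi * S * C / ε))
    have hm7 : 7 ≤ m := by
      have : (7:ℝ) ≤ m := le_trans (le_max_left _ _) hmgt.le
      exact_mod_cast this
    have hm0 : (0:ℝ) < m := by positivity
    have hmbig : 4 * Real.pi * S * C / ε < m := lt_of_le_of_lt (le_max_right _ _) hmgt
    set ζ : ℂ := Complex.exp (2 * Real.pi / m * Complex.I) with hζdef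
    have hζ : ζ ^ m = 1 := by
      rw [hζdef, ← Complex.exp_nat_mul, ← Complex.exp_two_pi_mul_I]
      congr 1
      have hmne : (m:ℂ) ≠ 0 := by exact_mod_cast ne_of_gt hm0
      push_cast
      field_simp
    choose k hk using fun i => root_close m hm7 (ω i) (hω1 i)
    set y' : ℕ →₀ ℂ := Finsupp.onFinset x.support (fun i => ζ ^ (k i) * x i)
      (fun i h => Finsupp.mem_support_iff.2 (right_ne_zero_of_mul h)) with hy'def
    have hy'app : ∀ i, y' i = ζ ^ (k i) * x i := fun i => rfl
    have hy'x : N y' = N x := hZ m (by omega) ζ hζ k x y' hy'app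
    have hsupp : (y - y').support ⊆ x.support := by
      intro i hi
      rw [Finsupp.mem_support_iff] at hi ⊢
      intro hx
      apply hi
      rw [Finsupp.sub_apply, hy'app, hxz i hx, hx, mul_zero, sub_zero]
    have hterm : ∀ i, ‖(y - y') i‖ ≤ 4 * Real.pi / m * ‖x i‖ := by
      intro i
      rw [Finsupp.sub_apply, hy'app, hyω i, ← sub_mul, norm_mul]
      exact mul_le_mul_of_nonneg_right (hk i) (norm_nonneg _)
    have hsum : ∑ i ∈ (y - y').support, ‖(y - y') i‖ ≤ 4 * Real.pi / m * S := by
      calc ∑ i ∈ (y - y').support, ‖(y - y') i‖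
          ≤ ∑ i ∈ x.support, ‖(y - y') i‖ :=
            Finset.sum_le_sum_of_subset_of_nonneg hsupp (fun _ _ _ => norm_nonneg _)
        _ ≤ ∑ i ∈ x.support, 4 * Real.pi / m * ‖x i‖ :=
            Finset.sum_le_sum fun i _ => hterm i
        _ = 4 * Real.pi / m * S := by rw [hS, Finset.mul_sum]
    have hfin : 4 * Real.pi / m * S * C ≤ ε := by
      rw [div_mul_eq_mul_div, div_mul_eq_mul_div, div_le_iff₀ hm0]
      have h4 : 4 * Real.pi * S * C < ε * m := by
        have := mul_lt_mul_of_pos_left hmbig hε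
        rwa [mul_div_cancel₀ _ (ne_of_gt hε)] at this
      linarith
    calc |N y - N x| = |N y - N y'| := by rw [hy'x]
      _ ≤ N (y - y') := Ndiff _ _
      _ ≤ (∑ i ∈ (y - y').support, ‖(y - y') i‖) * C := NsumBound _
      _ ≤ 4 * Real.pi / m * S * C := mul_le_mul_of_nonneg_right hsum hC0
      _ ≤ ε := hfin
  have habs : N y = N x := by
    by_contra hne
    have hpos : 0 < |N y - N x| := abs_pos.2 (sub_ne_zero.2 hne)
    have := key (|N y - N x| / 2) (by linarith)
    linarith
  exact habs.symm
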